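/- Let c ∈ (0,1] and q ∈ (0,1), and suppose the real number d ≥ 2 satisfies d ≥ (c+1)(1 − √(1 − 4 q c²/(c+1)²)) / (2 q² c²) with 4qc²/(c+1)² ≤ 1. Then q ≥ 1 / (d(c+1) − (c/(c+1))²). -/

import Mathlib

theorem stmt_13 (c q d : ℝ) (hc : 0 < c) (hc1 : c ≤ 1) (hq : 0 < q) (hq1 : q < 1)
    (hd : 2 ≤ d) (hsqrt : 4 * q * c ^ 2 / (c + 1) ^ 2 ≤ 1)
    (h : (c + 1) * (1 - Real.sqrt (1 - 4 * q * c ^ 2 / (c + 1) ^ 2)) / (2 * q ^ 2 * c ^ 2) ≤ d) :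
    1 / (d * (c + 1) - (c / (c + 1)) ^ 2) ≤ q := by
  set x := 4 * q * c ^ 2 / (c + 1) ^ 2 with hx
  have hc1' : (0:ℝ) < c + 1 := by linarith
  have hx0 : 0 ≤ x := by positivity
  have hs : Real.sqrt (1 - x) ≤ 1 - x/2 - x^2/8 := by
    have ha : 0 ≤ 1 - x/2 - x^2/8 := by nlinarith
    have h1 : 1 - x ≤ (1 - x/2 - x^2/8)^2 := by nlinarith
    calc Real.sqrt (1 - x) ≤ Real.sqrt ((1 - x/2 - x^2/8)^2) := Real.sqrt_le_sqrt h1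
      _ = 1 - x/2 - x^2/8 := Real.sqrt_sq ha
  -- key: 1/q + (c/(c+1))^2 ≤ d*(c+1)
  have hxval : x * (c+1)^2 = 4 * q * c^2 := by
    rw [hx, div_mul_cancel₀ _ (by positivity)]
  have hkey : 1/q + (c/(c+1))^2 ≤ d * (c + 1) := by
    have h2 : (c + 1) * (x/2 + x^2/8) ≤ d * (2 * q^2 * c^2) := by
      have hpos : (0:ℝ) < 2 * q^2 * c^2 := by positivity
      have := (div_le_iff₀ hpos).mp h
      nlinarith [hs]
    have h2' : (c + 1) * ((4*q*c^2/(c+1)^2)/2 + (4*q*c^2/(c+1)^2)^2/8) ≤ d * (2 * q^2 * c^2) := by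
      rw [← hx]; exact h2
    have hne : ((c:ℝ)+1) ≠ 0 := ne_of_gt hc1'
    have h3 : (c+1)^2 + q*c^2 ≤ d*q*(c+1)^3 := by
      field_simp at h2'
      nlinarith [h2', mul_pos (mul_pos hq (pow_pos hc 2)) (pow_pos hc1' 3)]
    have h4 : (1/q + (c/(c+1))^2) * (q*(c+1)^2) = (c+1)^2 + q*c^2 := by
      field_simp
    have h5 : (0:ℝ) < q*(c+1)^2 := by positivity
    rw [← mul_le_mul_iff_of_pos_right h5, h4]
    nlinarith [h3]
  have hden : 0 < d * (c + 1) - (c / (c + 1)) ^ 2 := by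
    have : 0 < 1/q := by positivity
    nlinarith
  rw [div_le_iff₀ hden]
  have h1q : 1/q ≤ d * (c+1) - (c/(c+1))^2 := by linarith
  calc (1:ℝ) = q * (1/q) := by field_simp
    _ ≤ q * (d * (c+1) - (c/(c+1))^2) := by nlinarith
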